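/- Let 0 ≤ μ, η ≤ 1 and let W_{μ,η} : ℝ⁴ → ℝ⁴ be the hemophilia operator defined below. For every z = (x₁, x₂, y₁, y₂) ∈ S^{2,2} (i.e. x₁, x₂, y₁, y₂ ≥ 0, x₁ + x₂ + y₁ + y₂ = 1, x₁ + x₂ > 0 and y₁ + y₂ > 0), writing z⁽ⁿ⁾ = W_{μ,η}ⁿ(z) = (x₁⁽ⁿ⁾, x₂⁽ⁿ⁾, y₁⁽ⁿ⁾, y₂⁽ⁿ⁾) and F(z) = (x₁ + x₂)(y₁ + y₂), one has F(z⁽ⁿ⁾) ≤ (1/4)^{2ⁿ} for all n ≥ 1, every coordinate of z⁽ⁿ⁺¹⁾ is between 0 and F(z⁽ⁿ⁾), and consequently z⁽ⁿ⁾ → (0,0,0,0) as n → ∞. -/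

import Mathlib

/-- The hemophilia gonosomal operator `W_{μ,η}` on `ℝ⁴`, acting on
`(x₁, x₂, y₁, y₂)`. -/
noncomputable def gonWhem (μ η : ℝ) (z : ℝ × ℝ × ℝ × ℝ) : ℝ × ℝ × ℝ × ℝ :=
  ((1 - μ) * (1 - η) / (2 - μ * η) * z.1 * z.2.2.1
     + (1 - μ) * (1 - η) / (4 - (1 + μ) * η) * z.2.1 * z.2.2.1,
   (μ + η - 2 * μ * η) / (2 - μ * η) * z.1 * z.2.2.1
     + (1 - μ) / (2 - μ) * z.1 * z.2.2.2
     + (1 + μ - 2 * μ * η) / (4 - (1 + μ) * η) * z.2.1 * z.2.2.1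
     + (1 - μ) / (3 - μ) * z.2.1 * z.2.2.2,
   (1 - μ) / (2 - μ * η) * z.1 * z.2.2.1
     + (1 - μ) / (2 - μ) * z.1 * z.2.2.2
     + (1 - μ) / (4 - (1 + μ) * η) * z.2.1 * z.2.2.1
     + (1 - μ) / (3 - μ) * z.2.1 * z.2.2.2,
   μ / (2 - μ * η) * z.1 * z.2.2.1
     + μ / (2 - μ) * z.1 * z.2.2.2
     + (1 + μ) / (4 - (1 + μ) * η) * z.2.1 * z.2.2.1
     + (1 + μ) / (3 - μ) * z.2.1 * z.2.2.2)

/-- The Lyapunov function `F(z) = (x₁ + x₂)(y₁ + y₂)`. -/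
noncomputable def gonFhem (z : ℝ × ℝ × ℝ × ℝ) : ℝ :=
  (z.1 + z.2.1) * (z.2.2.1 + z.2.2.2)

set_option maxHeartbeats 1000000 in
lemma gonStep (μ η : ℝ)
    (hμ0 : 0 ≤ μ) (hμ1 : μ ≤ 1) (hη0 : 0 ≤ η) (hη1 : η ≤ 1)
    (z : ℝ × ℝ × ℝ × ℝ)
    (hx1 : 0 ≤ z.1) (hx2 : 0 ≤ z.2.1) (hy1 : 0 ≤ z.2.2.1) (hy2 : 0 ≤ z.2.2.2) :
    (0 ≤ (gonWhem μ η z).1 ∧ 0 ≤ (gonWhem μ η z).2.1 ∧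
     0 ≤ (gonWhem μ η z).2.2.1 ∧ 0 ≤ (gonWhem μ η z).2.2.2) ∧
    (gonWhem μ η z).1 + (gonWhem μ η z).2.1 ≤ gonFhem z ∧
    (gonWhem μ η z).2.2.1 + (gonWhem μ η z).2.2.2 ≤ gonFhem z := by
  obtain ⟨x1, x2, y1, y2⟩ := z
  simp only [gonWhem, gonFhem] at *
  have hme : μ * η ≤ 1 := by nlinarith
  have hme2 : (1 + μ) * η ≤ 2 := by nlinarith
  have d1 : (0:ℝ) < 2 - μ * η := by linarith
  have d2 : (0:ℝ) < 2 - μ := by linarith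
  have d3 : (0:ℝ) < 3 - μ := by linarith
  have d4 : (0:ℝ) < 4 - (1 + μ) * η := by linarith
  have n1 : (0:ℝ) ≤ (1 - μ) * (1 - η) := by nlinarith
  have n2 : (0:ℝ) ≤ μ + η - 2 * μ * η := by nlinarith
  have n3 : (0:ℝ) ≤ 1 + μ - 2 * μ * η := by nlinarith
  have n4 : (0:ℝ) ≤ 1 - μ := by linarith
  have n5 : (0:ℝ) ≤ 1 + μ := by linarith
  have p1 : (0:ℝ) ≤ x1 * y1 := mul_nonneg hx1 hy1
  have p2 : (0:ℝ) ≤ x1 * y2 := mul_nonneg hx1 hy2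
  have p3 : (0:ℝ) ≤ x2 * y1 := mul_nonneg hx2 hy1
  have p4 : (0:ℝ) ≤ x2 * y2 := mul_nonneg hx2 hy2
  refine ⟨⟨?_, ?_, ?_, ?_⟩, ?_, ?_⟩
  · have := div_nonneg n1 d1.le
    have := div_nonneg n1 d4.le
    positivity
  · have h1 := div_nonneg n2 d1.le
    have h2 := div_nonneg n4 d2.le
    have h3 := div_nonneg n3 d4.le
    have h4 := div_nonneg n4 d3.le
    nlinarith [mul_nonneg (mul_nonneg h1 hx1) hy1, mul_nonneg (mul_nonneg h2 hx1) hy2,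
      mul_nonneg (mul_nonneg h3 hx2) hy1, mul_nonneg (mul_nonneg h4 hx2) hy2]
  · have h1 := div_nonneg n4 d1.le
    have h2 := div_nonneg n4 d2.le
    have h3 := div_nonneg n4 d4.le
    have h4 := div_nonneg n4 d3.le
    nlinarith [mul_nonneg (mul_nonneg h1 hx1) hy1, mul_nonneg (mul_nonneg h2 hx1) hy2,
      mul_nonneg (mul_nonneg h3 hx2) hy1, mul_nonneg (mul_nonneg h4 hx2) hy2]
  · have h1 := div_nonneg hμ0 d1.le
    have h2 := div_nonneg hμ0 d2.le
    have h3 := div_nonneg n5 d4.le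
    have h4 := div_nonneg n5 d3.le
    nlinarith [mul_nonneg (mul_nonneg h1 hx1) hy1, mul_nonneg (mul_nonneg h2 hx1) hy2,
      mul_nonneg (mul_nonneg h3 hx2) hy1, mul_nonneg (mul_nonneg h4 hx2) hy2]
  · -- x-sum ≤ F
    have c1 : (1 - μ) * (1 - η) / (2 - μ * η) + (μ + η - 2 * μ * η) / (2 - μ * η) ≤ 1 := by
      rw [← add_div, div_le_one d1]; linarith
    have c2 : (1 - μ) / (2 - μ) ≤ 1 := by rw [div_le_one d2]; linarith
    have c3 : (1 - μ) * (1 - η) / (4 - (1 + μ) * η) + (1 + μ - 2 * μ * η) / (4 - (1 + μ) * η) ≤ 1 := by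
      rw [← add_div, div_le_one d4]; linarith
    have c4 : (1 - μ) / (3 - μ) ≤ 1 := by rw [div_le_one d3]; linarith
    have e1 : (1 - μ) * (1 - η) / (2 - μ * η) * x1 * y1
        + (μ + η - 2 * μ * η) / (2 - μ * η) * x1 * y1 ≤ x1 * y1 := by
      calc (1 - μ) * (1 - η) / (2 - μ * η) * x1 * y1
          + (μ + η - 2 * μ * η) / (2 - μ * η) * x1 * y1
          = ((1 - μ) * (1 - η) / (2 - μ * η) + (μ + η - 2 * μ * η) / (2 - μ * η)) * (x1 * y1) := by
            ring
        _ ≤ x1 * y1 := mul_le_of_le_one_left p1 c1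
    have e2 : (1 - μ) / (2 - μ) * x1 * y2 ≤ x1 * y2 := by
      calc (1 - μ) / (2 - μ) * x1 * y2 = (1 - μ) / (2 - μ) * (x1 * y2) := by ring
        _ ≤ x1 * y2 := mul_le_of_le_one_left p2 c2
    have e3 : (1 - μ) * (1 - η) / (4 - (1 + μ) * η) * x2 * y1
        + (1 + μ - 2 * μ * η) / (4 - (1 + μ) * η) * x2 * y1 ≤ x2 * y1 := by
      calc (1 - μ) * (1 - η) / (4 - (1 + μ) * η) * x2 * y1
          + (1 + μ - 2 * μ * η) / (4 - (1 + μ) * η) * x2 * y1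
          = ((1 - μ) * (1 - η) / (4 - (1 + μ) * η) + (1 + μ - 2 * μ * η) / (4 - (1 + μ) * η)) * (x2 * y1) := by
            ring
        _ ≤ x2 * y1 := mul_le_of_le_one_left p3 c3
    have e4 : (1 - μ) / (3 - μ) * x2 * y2 ≤ x2 * y2 := by
      calc (1 - μ) / (3 - μ) * x2 * y2 = (1 - μ) / (3 - μ) * (x2 * y2) := by ring
        _ ≤ x2 * y2 := mul_le_of_le_one_left p4 c4
    have hF : (x1 + x2) * (y1 + y2) = x1 * y1 + x1 * y2 + x2 * y1 + x2 * y2 := by ring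
    linarith
  · -- y-sum ≤ F
    have c1 : (1 - μ) / (2 - μ * η) + μ / (2 - μ * η) ≤ 1 := by
      rw [← add_div, div_le_one d1]; linarith
    have c2 : (1 - μ) / (2 - μ) + μ / (2 - μ) ≤ 1 := by
      rw [← add_div, div_le_one d2]; linarith
    have c3 : (1 - μ) / (4 - (1 + μ) * η) + (1 + μ) / (4 - (1 + μ) * η) ≤ 1 := by
      rw [← add_div, div_le_one d4]; linarith
    have c4 : (1 - μ) / (3 - μ) + (1 + μ) / (3 - μ) ≤ 1 := by
      rw [← add_div, div_le_one d3]; linarith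
    have e1 : (1 - μ) / (2 - μ * η) * x1 * y1 + μ / (2 - μ * η) * x1 * y1 ≤ x1 * y1 := by
      calc (1 - μ) / (2 - μ * η) * x1 * y1 + μ / (2 - μ * η) * x1 * y1
          = ((1 - μ) / (2 - μ * η) + μ / (2 - μ * η)) * (x1 * y1) := by ring
        _ ≤ x1 * y1 := mul_le_of_le_one_left p1 c1
    have e2 : (1 - μ) / (2 - μ) * x1 * y2 + μ / (2 - μ) * x1 * y2 ≤ x1 * y2 := by
      calc (1 - μ) / (2 - μ) * x1 * y2 + μ / (2 - μ) * x1 * y2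
          = ((1 - μ) / (2 - μ) + μ / (2 - μ)) * (x1 * y2) := by ring
        _ ≤ x1 * y2 := mul_le_of_le_one_left p2 c2
    have e3 : (1 - μ) / (4 - (1 + μ) * η) * x2 * y1 + (1 + μ) / (4 - (1 + μ) * η) * x2 * y1 ≤ x2 * y1 := by
      calc (1 - μ) / (4 - (1 + μ) * η) * x2 * y1 + (1 + μ) / (4 - (1 + μ) * η) * x2 * y1
          = ((1 - μ) / (4 - (1 + μ) * η) + (1 + μ) / (4 - (1 + μ) * η)) * (x2 * y1) := by ring
        _ ≤ x2 * y1 := mul_le_of_le_one_left p3 c3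
    have e4 : (1 - μ) / (3 - μ) * x2 * y2 + (1 + μ) / (3 - μ) * x2 * y2 ≤ x2 * y2 := by
      calc (1 - μ) / (3 - μ) * x2 * y2 + (1 + μ) / (3 - μ) * x2 * y2
          = ((1 - μ) / (3 - μ) + (1 + μ) / (3 - μ)) * (x2 * y2) := by ring
        _ ≤ x2 * y2 := mul_le_of_le_one_left p4 c4
    have hF : (x1 + x2) * (y1 + y2) = x1 * y1 + x1 * y2 + x2 * y1 + x2 * y2 := by ring
    linarith


/-- For any `z ∈ S^{2,2}` and `0 ≤ μ, η ≤ 1`, the trajectory of the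
hemophilia operator satisfies `F(z⁽ⁿ⁾) ≤ (1/4)^{2ⁿ}` for `n ≥ 1`, every
coordinate of `z⁽ⁿ⁺¹⁾` lies between `0` and `F(z⁽ⁿ⁾)`, and the trajectory
tends to the fixed point `0` (exponentially fast). -/
theorem gonosomal_hemophilia_trajectory (μ η : ℝ)
    (hμ0 : 0 ≤ μ) (hμ1 : μ ≤ 1) (hη0 : 0 ≤ η) (hη1 : η ≤ 1)
    (z : ℝ × ℝ × ℝ × ℝ)
    (hx1 : 0 ≤ z.1) (hx2 : 0 ≤ z.2.1) (hy1 : 0 ≤ z.2.2.1) (hy2 : 0 ≤ z.2.2.2)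
    (hsum : z.1 + z.2.1 + z.2.2.1 + z.2.2.2 = 1)
    (hx : 0 < z.1 + z.2.1) (hy : 0 < z.2.2.1 + z.2.2.2) :
    (∀ n : ℕ, 1 ≤ n →
      gonFhem ((gonWhem μ η)^[n] z) ≤ (1 / 4 : ℝ) ^ 2 ^ n) ∧
    (∀ n : ℕ,
      (0 ≤ ((gonWhem μ η)^[n + 1] z).1 ∧
        ((gonWhem μ η)^[n + 1] z).1 ≤ gonFhem ((gonWhem μ η)^[n] z)) ∧
      (0 ≤ ((gonWhem μ η)^[n + 1] z).2.1 ∧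
        ((gonWhem μ η)^[n + 1] z).2.1 ≤ gonFhem ((gonWhem μ η)^[n] z)) ∧
      (0 ≤ ((gonWhem μ η)^[n + 1] z).2.2.1 ∧
        ((gonWhem μ η)^[n + 1] z).2.2.1 ≤ gonFhem ((gonWhem μ η)^[n] z)) ∧
      (0 ≤ ((gonWhem μ η)^[n + 1] z).2.2.2 ∧
        ((gonWhem μ η)^[n + 1] z).2.2.2 ≤ gonFhem ((gonWhem μ η)^[n] z))) ∧
    Filter.Tendsto (fun n => (gonWhem μ η)^[n] z) Filter.atTop
      (nhds ((0, 0, 0, 0) : ℝ × ℝ × ℝ × ℝ)) := by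
  set W := gonWhem μ η with hW
  -- all iterates have nonnegative coordinates
  have hpos : ∀ n : ℕ, 0 ≤ (W^[n] z).1 ∧ 0 ≤ (W^[n] z).2.1 ∧
      0 ≤ (W^[n] z).2.2.1 ∧ 0 ≤ (W^[n] z).2.2.2 := by
    intro n
    induction n with
    | zero => exact ⟨hx1, hx2, hy1, hy2⟩
    | succ n ih =>
      rw [Function.iterate_succ_apply']
      exact (gonStep μ η hμ0 hμ1 hη0 hη1 _ ih.1 ih.2.1 ih.2.2.1 ih.2.2.2).1
  have hF0 : ∀ n : ℕ, 0 ≤ gonFhem (W^[n] z) := by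
    intro n
    obtain ⟨h1, h2, h3, h4⟩ := hpos n
    exact mul_nonneg (by linarith) (by linarith)
  -- the key inequalities for each step
  have hstep : ∀ n : ℕ,
      (W^[n+1] z).1 + (W^[n+1] z).2.1 ≤ gonFhem (W^[n] z) ∧
      (W^[n+1] z).2.2.1 + (W^[n+1] z).2.2.2 ≤ gonFhem (W^[n] z) := by
    intro n
    obtain ⟨h1, h2, h3, h4⟩ := hpos n
    rw [Function.iterate_succ_apply']
    exact (gonStep μ η hμ0 hμ1 hη0 hη1 _ h1 h2 h3 h4).2
  have hFsq : ∀ n : ℕ, gonFhem (W^[n+1] z) ≤ gonFhem (W^[n] z) * gonFhem (W^[n] z) := by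
    intro n
    obtain ⟨hxs, hys⟩ := hstep n
    obtain ⟨h1, h2, h3, h4⟩ := hpos (n + 1)
    exact mul_le_mul hxs hys (by linarith) (hF0 n)
  -- F(z) ≤ 1/4
  have hF4 : gonFhem z ≤ 1 / 4 := by
    have : gonFhem z = (z.1 + z.2.1) * (z.2.2.1 + z.2.2.2) := rfl
    nlinarith [sq_nonneg ((z.1 + z.2.1) - (z.2.2.1 + z.2.2.2))]
  -- part 1
  have part1 : ∀ n : ℕ, 1 ≤ n → gonFhem (W^[n] z) ≤ (1 / 4 : ℝ) ^ 2 ^ n := by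
    intro n hn
    induction n with
    | zero => omega
    | succ n ih =>
      rcases Nat.lt_or_ge n 1 with h | h
      · -- n = 0 case
        have h0 : n = 0 := by omega
        subst h0
        have := hFsq 0
        simp only [Function.iterate_zero_apply] at this
        calc gonFhem (W^[1] z) ≤ gonFhem z * gonFhem z := this
          _ ≤ (1/4) * (1/4) := mul_le_mul hF4 hF4 (hF0 0) (by norm_num)
          _ = (1 / 4 : ℝ) ^ 2 ^ 1 := by norm_num
      · have hn' : 1 ≤ n := h
        have ihn := ih hn'
        calc gonFhem (W^[n+1] z) ≤ gonFhem (W^[n] z) * gonFhem (W^[n] z) := hFsq n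
          _ ≤ (1 / 4 : ℝ) ^ 2 ^ n * (1 / 4 : ℝ) ^ 2 ^ n :=
            mul_le_mul ihn ihn (hF0 n) (by positivity)
          _ = (1 / 4 : ℝ) ^ 2 ^ (n + 1) := by rw [← pow_add]; ring_nf
  -- part 2
  have part2 : ∀ n : ℕ,
      (0 ≤ (W^[n + 1] z).1 ∧ (W^[n + 1] z).1 ≤ gonFhem (W^[n] z)) ∧
      (0 ≤ (W^[n + 1] z).2.1 ∧ (W^[n + 1] z).2.1 ≤ gonFhem (W^[n] z)) ∧
      (0 ≤ (W^[n + 1] z).2.2.1 ∧ (W^[n + 1] z).2.2.1 ≤ gonFhem (W^[n] z)) ∧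
      (0 ≤ (W^[n + 1] z).2.2.2 ∧ (W^[n + 1] z).2.2.2 ≤ gonFhem (W^[n] z)) := by
    intro n
    obtain ⟨h1, h2, h3, h4⟩ := hpos (n + 1)
    obtain ⟨hxs, hys⟩ := hstep n
    exact ⟨⟨h1, by linarith⟩, ⟨h2, by linarith⟩, ⟨h3, by linarith⟩, ⟨h4, by linarith⟩⟩
  refine ⟨part1, part2, ?_⟩
  -- part 3: convergence
  have hbnd : Filter.Tendsto (fun n : ℕ => (1 / 4 : ℝ) ^ 2 ^ n) Filter.atTop (nhds 0) := by
    have h1 : Filter.Tendsto (fun k : ℕ => (1 / 4 : ℝ) ^ k) Filter.atTop (nhds 0) :=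
      tendsto_pow_atTop_nhds_zero_of_lt_one (by norm_num) (by norm_num)
    have h2 : Filter.Tendsto (fun n : ℕ => 2 ^ n) Filter.atTop Filter.atTop :=
      tendsto_pow_atTop_atTop_of_one_lt one_lt_two
    exact h1.comp h2
  have hFtend : Filter.Tendsto (fun n : ℕ => gonFhem (W^[n] z)) Filter.atTop (nhds 0) := by
    apply squeeze_zero' (Filter.Eventually.of_forall hF0)
    · filter_upwards [Filter.eventually_ge_atTop 1] with n hn
      exact part1 n hn
    · exact hbnd
  have hc : ∀ (f : ℝ × ℝ × ℝ × ℝ → ℝ),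
      (∀ n : ℕ, 0 ≤ f (W^[n+1] z)) → (∀ n : ℕ, f (W^[n+1] z) ≤ gonFhem (W^[n] z)) →
      Filter.Tendsto (fun n : ℕ => f (W^[n] z)) Filter.atTop (nhds 0) := by
    intro f h0 hle
    have : Filter.Tendsto (fun n : ℕ => f (W^[n+1] z)) Filter.atTop (nhds 0) :=
      squeeze_zero h0 hle hFtend
    exact (Filter.tendsto_add_atTop_iff_nat 1).mp this
  have t1 := hc (fun w => w.1) (fun n => (part2 n).1.1) (fun n => (part2 n).1.2)
  have t2 := hc (fun w => w.2.1) (fun n => (part2 n).2.1.1) (fun n => (part2 n).2.1.2)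
  have t3 := hc (fun w => w.2.2.1) (fun n => (part2 n).2.2.1.1) (fun n => (part2 n).2.2.1.2)
  have t4 := hc (fun w => w.2.2.2) (fun n => (part2 n).2.2.2.1) (fun n => (part2 n).2.2.2.2)
  exact t1.prodMk_nhds (t2.prodMk_nhds (t3.prodMk_nhds t4))
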